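/- Let Δ_1, ..., Δ_m be finite sets and g_i a permutation of Δ_i with c_i cycles on Δ_i. Then the product permutation (g_1,...,g_m) acting componentwise on Δ_1 × ... × Δ_m has at least c_1·c_2·...·c_m cycles. -/
import Mathlib

def piCongrHom {m : ℕ} (Δ : Fin m → Type*) :
    (∀ i, Equiv.Perm (Δ i)) →* Equiv.Perm (∀ i, Δ i) where
  toFun := Equiv.piCongrRight
  map_one' := by ext x i; rfl
  map_mul' f g := by ext x i; rfl

/-- If `g_i` has `c_i` cycles on `Δ_i`, then the product permutation has at least
`c_1 ⋯ c_m` cycles on `Δ_1 × ⋯ × Δ_m`. -/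
theorem stmt8 {m : ℕ} (Δ : Fin m → Type*) [∀ i, Fintype (Δ i)]
    (g : ∀ i, Equiv.Perm (Δ i)) (c : Fin m → ℕ)
    (hc : ∀ i, Nat.card (MulAction.orbitRel.Quotient (Subgroup.zpowers (g i)) (Δ i)) = c i) :
    ∏ i, c i ≤
      Nat.card (MulAction.orbitRel.Quotient
        (Subgroup.zpowers (Equiv.piCongrRight g)) (∀ i, Δ i)) := by
  classical
  have key : ∀ (n : ℤ) (x : ∀ i, Δ i) (i : Fin m),
      ((Equiv.piCongrRight g) ^ n) x i = ((g i) ^ n) (x i) := by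
    intro n x i
    have h : (Equiv.piCongrRight g) ^ n = piCongrHom Δ (g ^ n) :=
      (map_zpow (piCongrHom Δ) g n).symm
    rw [h]
    show Equiv.piCongrRight (g ^ n) x i = _
    simp [Equiv.piCongrRight, Pi.pow_apply]
  set Q := MulAction.orbitRel.Quotient (Subgroup.zpowers (Equiv.piCongrRight g)) (∀ i, Δ i)
  set Qi := fun i => MulAction.orbitRel.Quotient (Subgroup.zpowers (g i)) (Δ i)
  have hwd : ∀ (x y : ∀ i, Δ i),
      (MulAction.orbitRel (Subgroup.zpowers (Equiv.piCongrRight g)) (∀ i, Δ i)) x y →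
      (fun i => (⟦x i⟧ : Qi i)) = (fun i => (⟦y i⟧ : Qi i)) := by
    intro x y hxy
    obtain ⟨σ, hσ⟩ := hxy
    obtain ⟨n, hn⟩ := σ.2
    have hn' : Equiv.piCongrRight g ^ n = (σ : Equiv.Perm (∀ i, Δ i)) := hn
    funext i
    refine Quotient.sound ⟨⟨(g i) ^ n, n, rfl⟩, ?_⟩
    show ((g i) ^ n) (y i) = x i
    rw [← key n y i, hn']
    exact congrFun hσ i
  let f : Q → ∀ i, Qi i := Quotient.lift (fun x i => (⟦x i⟧ : Qi i)) hwd
  have hf : Function.Surjective f := by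
    intro q
    refine ⟨⟦fun i => (q i).out⟧, ?_⟩
    show (fun i => (⟦(q i).out⟧ : Qi i)) = q
    funext i
    exact Quotient.out_eq _
  calc ∏ i, c i = Nat.card (∀ i, Qi i) := by
        rw [Nat.card_pi]; exact (Finset.prod_congr rfl fun i _ => (hc i).symm)
    _ ≤ Nat.card Q := Nat.card_le_card_of_surjective f hf
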